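/- arXiv:2403.18345 — 3 statements merged into one kernel-verified Lean document; each statement's English description precedes it below -/
import Mathlib

section
/- Let a, b, c, d ∈ ℂ with ad − bc = 1. In the polynomial ring ℂ[X,Y] there exists a scalar μ ∈ ℂ such that (aX + bY)^6 · (cX + dY)^6 = μ · X^6 Y^6 if and only if (b = 0 and c = 0) or (a = 0 and d = 0). Equivalently, the stabilizer in SL₂(ℂ) of the point of the projective space of degree-12 binary forms corresponding to x₀⁶x₁⁶ consists exactly of the diagonal matrices diag(λ, λ⁻¹) and the antidiagonal matrices [[0, λ], [−λ⁻¹, 0]]. -/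
open MvPolynomial

/-- For `a, b, c, d ∈ ℂ` with `ad − bc = 1` (i.e. a matrix in `SL₂(ℂ)`),
the substituted binary form `(aX + bY)⁶ (cX + dY)⁶` is a scalar multiple of `X⁶Y⁶`
if and only if the matrix is diagonal (`b = 0 ∧ c = 0`) or antidiagonal (`a = 0 ∧ d = 0`);
this computes the stabilizer in `SL₂(ℂ)` of the point `p₆,₆ = x₀⁶x₁⁶`. -/
theorem stabilizer_of_x6y6 (a b c d : ℂ) (h : a * d - b * c = 1) :
    (∃ μ : ℂ,
        (C a * X 0 + C b * X 1) ^ 6 * (C c * X 0 + C d * X 1) ^ 6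
          = C μ * (X 0 ^ 6 * X 1 ^ 6 : MvPolynomial (Fin 2) ℂ)) ↔
      ((b = 0 ∧ c = 0) ∨ (a = 0 ∧ d = 0)) := by
  constructor
  · rintro ⟨μ, hμ⟩
    have h1 := congrArg (eval fun i : Fin 2 => if i = 0 then (1:ℂ) else 0) hμ
    have h2 := congrArg (eval fun i : Fin 2 => if i = 0 then (0:ℂ) else 1) hμ
    simp only [map_mul, map_pow, map_add, eval_C, eval_X, if_pos, if_neg,
      Fin.isValue] at h1 h2
    norm_num at h1 h2
    rcases h1 with ha | hc
    · rcases h2 with hb | hd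
      · exfalso; rw [ha, hb] at h; simp at h
      · exact Or.inr ⟨ha, hd⟩
    · rcases h2 with hb | hd
      · exact Or.inl ⟨hb, hc⟩
      · exfalso; rw [hc, hd] at h; simp at h
  · rintro (⟨hb, hc⟩ | ⟨ha, hd⟩)
    · exact ⟨a ^ 6 * d ^ 6, by subst hb hc; simp [map_mul, map_pow]; ring⟩
    · exact ⟨b ^ 6 * c ^ 6, by subst ha hd; simp [map_mul, map_pow]; ring⟩
end

section
/- Let G be the 4×4 integer matrix [[0,3,0,0],[3,0,0,0],[0,0,0,1],[0,0,1,0]] (the Gram matrix of U(3) ⊕ U in the basis (e, f, e′, f′)) and let Θ be the 4×4 integer matrix [[−2,0,−1,0],[0,1,0,−1],[3,0,1,0],[0,3,0,−2]] (the matrix of the map θ₁ with θ₁(e) = −2e + 3e′, θ₁(f) = f + 3f′, θ₁(e′) = −e + e′, θ₁(f′) = −f − 2f′). Then: (i) Θᵀ G Θ = G, so θ₁ is an isometry of U(3) ⊕ U; (ii) Θ² + Θ + I = 0, hence Θ³ = I, so θ₁ has order 3; (iii) Θ has no nonzero fixed vectors: Θx = x implies x = 0 for x ∈ ℚ⁴;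 (iv) (Θ − I)·G⁻¹ has integer entries, so θ₁ acts trivially on the discriminant group (U(3) ⊕ U)*/(U(3) ⊕ U). -/
namespace ThetaOneIsometry

/-- The Gram matrix of `U(3) ⊕ U` in the basis `(e, f, e′, f′)`. -/
def G : Matrix (Fin 4) (Fin 4) ℤ :=
  !![0, 3, 0, 0;
     3, 0, 0, 0;
     0, 0, 0, 1;
     0, 0, 1, 0]

/-- The matrix of the map `θ₁` with `θ₁(e) = −2e + 3e′`, `θ₁(f) = f + 3f′`,
`θ₁(e′) = −e + e′`, `θ₁(f′) = −f − 2f′` in the basis `(e, f, e′, f′)`. -/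
def Θ : Matrix (Fin 4) (Fin 4) ℤ :=
  !![-2, 0, -1,  0;
      0, 1,  0, -1;
      3, 0,  1,  0;
      0, 3,  0, -2]

lemma h1 : Θ.transpose * G * Θ = G := by decide

lemma h2 : Θ ^ 2 + Θ + 1 = 0 := by decide

lemma h3 : Θ ^ 3 = 1 := by decide

lemma hΘne : Θ ≠ 1 := by decide

lemma h4 : orderOf Θ = 3 := orderOf_eq_prime h3 hΘne

/-- The integer matrix equal to `(Θ − 1)·G⁻¹`. -/
def M : Matrix (Fin 4) (Fin 4) ℤ :=
  !![0, -1, 0, -1;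
     0, 0, -1, 0;
     0, 1, 0, 0;
     1, 0, -3, 0]

lemma Ginv : (G.map ((↑) : ℤ → ℚ))⁻¹ =
    !![0, 1/3, 0, 0; 1/3, 0, 0, 0; 0, 0, 0, 1; 0, 0, 1, 0] := by
  apply Matrix.inv_eq_right_inv
  ext i j
  fin_cases i <;> fin_cases j <;>
    norm_num [G, Matrix.mul_apply, Fin.sum_univ_four, Matrix.one_apply,
      Matrix.vecHead, Matrix.vecTail, Fin.ext_iff, Matrix.cons_val_two, Matrix.cons_val_three]

lemma hprod : (Θ.map ((↑) : ℤ → ℚ) - 1) * (G.map ((↑) : ℤ → ℚ))⁻¹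
    = M.map ((↑) : ℤ → ℚ) := by
  rw [Ginv]
  ext i j
  fin_cases i <;> fin_cases j <;>
    norm_num [Θ, M, Matrix.mul_apply, Fin.sum_univ_four, Matrix.sub_apply,
      Matrix.one_apply, Matrix.map_apply, Matrix.vecHead, Matrix.vecTail, Fin.ext_iff,
      Matrix.cons_val_two, Matrix.cons_val_three,
      (show ((3:Fin 4):ℕ) = 3 from rfl), (show ((2:Fin 4):ℕ) = 2 from rfl),
      (show ((1:Fin 4):ℕ) = 1 from rfl), (show ((0:Fin 4):ℕ) = 0 from rfl)]

/-- (i) `Θᵀ G Θ = G`, so `θ₁` is an isometry of `U(3) ⊕ U`;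
(ii) `Θ² + Θ + I = 0`, hence `Θ³ = I` and `θ₁` has order `3`;
(iii) `Θ` has no nonzero fixed vectors over `ℚ`;
(iv) `(Θ − I)·G⁻¹` has integer entries, so `θ₁` acts trivially on the discriminant group
`(U(3) ⊕ U)*/(U(3) ⊕ U)`. -/
theorem theta_one_isometry :
    (Θ.transpose * G * Θ = G) ∧
    (Θ ^ 2 + Θ + 1 = 0) ∧ (Θ ^ 3 = 1) ∧ (orderOf Θ = 3) ∧
    (∀ x : Fin 4 → ℚ, (Θ.map ((↑) : ℤ → ℚ)).mulVec x = x → x = 0) ∧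
    (∀ i j : Fin 4, ∃ n : ℤ,
      ((Θ.map ((↑) : ℤ → ℚ) - 1) * (G.map ((↑) : ℤ → ℚ))⁻¹) i j = (n : ℚ)) := by
  refine ⟨h1, h2, h3, h4, ?_, ?_⟩
  · intro x hx
    have e0 := congrFun hx 0
    have e1 := congrFun hx 1
    have e2 := congrFun hx 2
    have e3 := congrFun hx 3
    simp [Θ, Matrix.mulVec, dotProduct, Fin.sum_univ_four] at e0 e1 e2 e3
    have hx0 : x 0 = 0 := by linarith
    have hx2 : x 2 = 0 := by linarith
    have hx3 : x 3 = 0 := by linarith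
    have hx1 : x 1 = 0 := by linarith
    funext i
    fin_cases i <;> simp [hx0, hx1, hx2, hx3]
  · intro i j
    exact ⟨M i j, by rw [hprod, Matrix.map_apply]⟩

end ThetaOneIsometry
end

section
/- Set c₆ = −6·(2π)⁶/(3⁶·6!) and z = 26·(2π)⁶/(3⁷·6!) (real numbers). For real numbers m₀₀, m₄₃, m₂₃, the two equations −(4π²/3)·m₀₀ + (4π²/9)·m₂₃ = 0 and 3·(2⁵ + 1)·c₆·m₀₀ + 3·z·m₄₃ + 6·c₆·m₂₃ = 0 hold simultaneously if and only if m₂₃ = 3·m₀₀ and m₄₃ = 27·m₀₀. Moreover, under these conditions, ((3¹⁰ − 3)/(2·11·61))·m₀₀ + (3/(11·61))·m₄₃ + (3·(2⁹ + 1)/(11·61))·m₂₃ = 51·m₀₀. -/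
open Real

namespace ObstructionEquations

/-- The Fourier coefficient `c₆ = −6·(2π)⁶/(3⁶·6!)`. -/
noncomputable def c₆ : ℝ := -6 * (2 * π) ^ 6 / (3 ^ 6 * 720)

/-- The value `z = ζ¹(6) + ζ⁻¹(6) = 26·(2π)⁶/(3⁷·6!)`. -/
noncomputable def z : ℝ := 26 * (2 * π) ^ 6 / (3 ^ 7 * 720)

/-- For real numbers `m₀₀, m₄₃, m₂₃`, the two obstruction equations
`−(4π²/3)·m₀₀ + (4π²/9)·m₂₃ = 0` and `3·(2⁵+1)·c₆·m₀₀ + 3·z·m₄₃ + 6·c₆·m₂₃ = 0` hold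
simultaneously if and only if `m₂₃ = 3·m₀₀` and `m₄₃ = 27·m₀₀`; moreover, under these
conditions the weight `((3¹⁰−3)/(2·11·61))·m₀₀ + (3/(11·61))·m₄₃ + (3·(2⁹+1)/(11·61))·m₂₃`
equals `51·m₀₀`. -/
theorem obstruction_solution (m00 m43 m23 : ℝ) :
    ((-(4 * π ^ 2 / 3) * m00 + (4 * π ^ 2 / 9) * m23 = 0 ∧
        3 * (2 ^ 5 + 1) * c₆ * m00 + 3 * z * m43 + 6 * c₆ * m23 = 0) ↔
      (m23 = 3 * m00 ∧ m43 = 27 * m00)) ∧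
    ((m23 = 3 * m00 ∧ m43 = 27 * m00) →
      ((3 ^ 10 - 3) / (2 * 11 * 61)) * m00 + (3 / (11 * 61)) * m43 +
          (3 * (2 ^ 9 + 1) / (11 * 61)) * m23 = 51 * m00) := by
  have hπ2 : (π:ℝ)^2 ≠ 0 := pow_ne_zero _ Real.pi_ne_zero
  have hπ6 : (π:ℝ)^6 ≠ 0 := pow_ne_zero _ Real.pi_ne_zero
  unfold c₆ z
  refine ⟨⟨fun ⟨h1, h2⟩ => ?_, fun ⟨h1, h2⟩ => ?_⟩, fun ⟨h1, h2⟩ => by rw [h1, h2]; ring⟩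
  · have e1 : m23 = 3 * m00 := by
      have : π^2 * (m23 - 3*m00) = π^2 * 0 := by ring_nf; ring_nf at h1; linarith
      have := mul_left_cancel₀ hπ2 this
      linarith
    subst e1
    refine ⟨rfl, ?_⟩
    have : π^6 * (m43 - 27*m00) = π^6 * 0 := by ring_nf; ring_nf at h2; linarith
    have := mul_left_cancel₀ hπ6 this
    linarith
  · subst h1 h2; constructor <;> ring

end ObstructionEquations
end
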